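/- Let W be a symmetric n×n real matrix with nonnegative entries and zero diagonal, and let 0 < α < 1/ρ(W) be such that I − αW is row diagonally dominant, i.e., 1 ≥ α·∑_{j≠i} w_ij for all i. Then the Katz kernel K = (I − αW)^{-1} satisfies the triangle inequality for proximities: K_xy + K_xz − K_yz ≤ K_xx for all x, y, z ∈ {1,…,n}. -/

import Mathlib

open Matrix Finset

/-- If `T` is a nonempty "flat component" (each row sum within `T` saturates the
diagonal dominance bound), then the indicator of `T` is in the kernel of `1 - α•W`,
contradicting injectivity. -/
private lemma katz_aux_no_flat {n : ℕ} (W : Matrix (Fin n) (Fin n) ℝ)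
    (hsymm : ∀ i j, W j i = W i j) (hnn : ∀ i j, 0 ≤ W i j)
    (α : ℝ) (hα : 0 < α) (hdom : ∀ i, α * ∑ j, W i j ≤ 1)
    (hinj : ∀ v : Fin n → ℝ, (1 - α • W) *ᵥ v = 0 → v = 0)
    (T : Finset (Fin n)) (hT : T.Nonempty)
    (hflat : ∀ k ∈ T, α * ∑ j ∈ T, W k j = 1) : False := by
  have hzero : ∀ k ∈ T, ∀ j, j ∉ T → W k j = 0 := by
    intro k hk j hj
    have h1 : ∑ j ∈ T, W k j ≤ ∑ j, W k j :=
      Finset.sum_le_sum_of_subset_of_nonneg (Finset.subset_univ T) (fun i _ _ => hnn k i)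
    have h2 : α * ∑ j, W k j ≤ α * ∑ j ∈ T, W k j := by
      rw [hflat k hk]; exact hdom k
    have h3 : ∑ j, W k j ≤ ∑ j ∈ T, W k j := le_of_mul_le_mul_left h2 hα
    have heq : ∑ j ∈ T, W k j = ∑ j, W k j := le_antisymm h1 h3
    have h4 : ∑ j ∈ Finset.univ \ T, W k j = 0 := by
      have := Finset.sum_sdiff (f := fun j => W k j) (Finset.subset_univ T)
      linarith
    exact (Finset.sum_eq_zero_iff_of_nonneg (fun i _ => hnn k i)).mp h4 j
      (Finset.mem_sdiff.mpr ⟨Finset.mem_univ j, hj⟩)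
  set v : Fin n → ℝ := fun j => if j ∈ T then 1 else 0 with hv
  have hWv : ∀ i', (W *ᵥ v) i' = ∑ j ∈ T, W i' j := by
    intro i'
    simp only [Matrix.mulVec, dotProduct, hv, mul_ite, mul_one, mul_zero]
    rw [Finset.sum_ite_mem, Finset.univ_inter]
  have hAv : (1 - α • W) *ᵥ v = 0 := by
    funext i
    rw [Matrix.sub_mulVec, Matrix.one_mulVec, Matrix.smul_mulVec]
    simp only [Pi.sub_apply, Pi.smul_apply, Pi.zero_apply, smul_eq_mul, hWv]
    by_cases hi : i ∈ T
    · simp only [hv, hi, if_true]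
      rw [hflat i hi]; ring
    · have : ∑ j ∈ T, W i j = 0 :=
        Finset.sum_eq_zero fun j hj => by rw [← hsymm i j]; exact hzero j hj i hi
      simp [hv, hi, this]
  have hv0 := hinj v hAv
  obtain ⟨k, hk⟩ := hT
  have : v k = 0 := by rw [hv0]; rfl
  simp only [hv, hk, if_true] at this
  exact one_ne_zero this

/-- Maximum principle: if `(1-α•W) p = e_x - e_y` then `p` attains its maximum at `x`. -/
private lemma katz_aux_max {n : ℕ} (W : Matrix (Fin n) (Fin n) ℝ)
    (hsymm : ∀ i j, W j i = W i j) (hnn : ∀ i j, 0 ≤ W i j)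
    (α : ℝ) (hα : 0 < α) (hdom : ∀ i, α * ∑ j, W i j ≤ 1)
    (hinj : ∀ v : Fin n → ℝ, (1 - α • W) *ᵥ v = 0 → v = 0)
    (x y : Fin n) (p : Fin n → ℝ)
    (hp : ∀ i, p i - α * ∑ j, W i j * p j
        = (if i = x then (1:ℝ) else 0) - (if i = y then 1 else 0)) :
    ∀ z, p z ≤ p x := by
  intro z
  by_contra hcon
  push_neg at hcon
  have : Nonempty (Fin n) := ⟨x⟩
  obtain ⟨m, hm⟩ := Finite.exists_max p
  have hxm : p x < p m := lt_of_lt_of_le hcon (hm z)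
  by_cases hM : 0 < p m
  · -- positive maximum : the set where the max is attained is a flat component
    set S : Finset (Fin n) := Finset.univ.filter (fun i => p i = p m) with hS
    have hmemS : ∀ i, i ∈ S ↔ p i = p m := by
      intro i; simp [hS]
    have key : ∀ k ∈ S, (α * ∑ j, W k j = 1) ∧ (∀ j, W k j ≠ 0 → p j = p m) := by
      intro k hk
      have hpk : p k = p m := (hmemS k).mp hk
      have hknx : k ≠ x := fun h => by rw [h] at hpk; linarith
      have hb : p k - α * ∑ j, W k j * p j ≤ 0 := by
        rw [hp k, if_neg hknx]
        split <;> norm_num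
      have h1 : ∑ j, W k j * p j ≤ ∑ j, W k j * p m :=
        Finset.sum_le_sum fun j _ => mul_le_mul_of_nonneg_left (hm j) (hnn k j)
      have h2 : α * ∑ j, W k j * p m ≤ p m := by
        rw [← Finset.sum_mul, ← mul_assoc]
        calc α * (∑ j, W k j) * p m ≤ 1 * p m :=
              mul_le_mul_of_nonneg_right (hdom k) hM.le
          _ = p m := one_mul _
      have hlow : p m ≤ α * ∑ j, W k j * p j := by linarith [hpk ▸ hb]
      have e1 : α * ∑ j, W k j * p j = p m :=
        le_antisymm (le_trans (mul_le_mul_of_nonneg_left h1 hα.le) h2) hlow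
      have e2 : α * ∑ j, W k j * p m = p m :=
        le_antisymm h2 (by linarith [mul_le_mul_of_nonneg_left h1 hα.le])
      constructor
      · have : (α * ∑ j, W k j) * p m = 1 * p m := by
          rw [one_mul, mul_assoc, Finset.sum_mul, e2]
        exact mul_right_cancel₀ (ne_of_gt hM) this
      · intro j hWj
        have hsame : ∑ j, W k j * p m = ∑ j, W k j * p j :=
          mul_left_cancel₀ hα.ne' (e2.trans e1.symm)
        have hsum0 : ∑ j, (W k j * p m - W k j * p j) = 0 := by
          rw [Finset.sum_sub_distrib, hsame, sub_self]
        have := (Finset.sum_eq_zero_iff_of_nonneg (fun j _ => by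
          have := mul_le_mul_of_nonneg_left (hm j) (hnn k j)
          linarith)).mp hsum0 j (Finset.mem_univ j)
        have := sub_eq_zero.mp this
        exact mul_left_cancel₀ hWj this.symm
    have hSne : S.Nonempty := ⟨m, (hmemS m).mpr rfl⟩
    refine katz_aux_no_flat W hsymm hnn α hα hdom hinj S hSne ?_
    intro k hk
    have hfull : ∑ j ∈ S, W k j = ∑ j, W k j := by
      refine Finset.sum_subset (Finset.subset_univ S) fun j _ hj => ?_
      by_contra hWj
      exact hj ((hmemS j).mpr ((key k hk).2 j hWj))
    rw [hfull]
    exact (key k hk).1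
  · -- nonpositive maximum : the set where `p < 0` is a flat component
    push_neg at hM
    have hple : ∀ j, p j ≤ 0 := fun j => le_trans (hm j) hM
    set D : Finset (Fin n) := Finset.univ.filter (fun i => p i < 0) with hD
    have hmemD : ∀ i, i ∈ D ↔ p i < 0 := by
      intro i; simp [hD]
    have hxD : x ∈ D := (hmemD x).mpr (lt_of_lt_of_le hxm hM)
    have hpzero : ∀ j, j ∉ D → p j = 0 := by
      intro j hj
      have : ¬ p j < 0 := fun h => hj ((hmemD j).mpr h)
      exact le_antisymm (hple j) (not_lt.mp this)
    -- column sums within D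
    have hcol : ∀ j, α * ∑ i ∈ D, W i j ≤ 1 := by
      intro j
      have h1 : ∑ i ∈ D, W i j ≤ ∑ i, W i j :=
        Finset.sum_le_sum_of_subset_of_nonneg (Finset.subset_univ D) (fun i _ _ => hnn i j)
      have h2 : ∑ i, W i j = ∑ i, W j i := Finset.sum_congr rfl fun i _ => hsymm j i
      calc α * ∑ i ∈ D, W i j ≤ α * ∑ i, W i j :=
            mul_le_mul_of_nonneg_left h1 hα.le
        _ = α * ∑ i, W j i := by rw [h2]
        _ ≤ 1 := hdom j
    -- each summand on the left is nonpositive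
    have hterm : ∀ j ∈ D, p j * (1 - α * ∑ i ∈ D, W i j) ≤ 0 := by
      intro j hj
      have hpj : p j < 0 := (hmemD j).mp hj
      have : 0 ≤ 1 - α * ∑ i ∈ D, W i j := by linarith [hcol j]
      exact mul_nonpos_of_nonpos_of_nonneg hpj.le this
    -- sum of the equation hp over D
    have hsum : ∑ j ∈ D, p j * (1 - α * ∑ i ∈ D, W i j)
        = ∑ i ∈ D, ((if i = x then (1:ℝ) else 0) - (if i = y then 1 else 0)) := by
      have h1 : ∀ i, ∑ j, W i j * p j = ∑ j ∈ D, W i j * p j := fun i =>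
        (Finset.sum_subset (Finset.subset_univ D) fun j _ hj => by
          rw [hpzero j hj, mul_zero]).symm
      calc ∑ j ∈ D, p j * (1 - α * ∑ i ∈ D, W i j)
          = ∑ j ∈ D, (p j - ∑ i ∈ D, α * (W i j * p j)) := by
            refine Finset.sum_congr rfl fun j _ => ?_
            have : ∑ i ∈ D, α * (W i j * p j) = (α * ∑ i ∈ D, W i j) * p j := by
              rw [Finset.mul_sum, Finset.sum_mul]
              exact Finset.sum_congr rfl fun i _ => by ring
            rw [this]; ring
        _ = ∑ j ∈ D, p j - ∑ j ∈ D, ∑ i ∈ D, α * (W i j * p j) := Finset.sum_sub_distrib _ _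
        _ = ∑ i ∈ D, p i - ∑ i ∈ D, ∑ j ∈ D, α * (W i j * p j) := by rw [Finset.sum_comm]
        _ = ∑ i ∈ D, (p i - α * ∑ j, W i j * p j) := by
            rw [← Finset.sum_sub_distrib]
            refine Finset.sum_congr rfl fun i _ => ?_
            rw [h1 i, Finset.mul_sum]
        _ = ∑ i ∈ D, ((if i = x then (1:ℝ) else 0) - (if i = y then 1 else 0)) :=
            Finset.sum_congr rfl fun i _ => hp i
    have hrhs : 0 ≤ ∑ i ∈ D, ((if i = x then (1:ℝ) else 0) - (if i = y then 1 else 0)) := by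
      rw [Finset.sum_sub_distrib, Finset.sum_ite_eq' D x (fun _ => (1:ℝ)),
        Finset.sum_ite_eq' D y (fun _ => (1:ℝ)), if_pos hxD]
      split <;> norm_num
    have hsum0 : ∑ j ∈ D, p j * (1 - α * ∑ i ∈ D, W i j) = 0 :=
      le_antisymm (Finset.sum_nonpos hterm) (hsum ▸ hrhs)
    have hflatD : ∀ k ∈ D, α * ∑ j ∈ D, W k j = 1 := by
      intro k hk
      have hall := (Finset.sum_eq_zero_iff_of_nonpos hterm).mp hsum0 k hk
      have hpk : p k < 0 := (hmemD k).mp hk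
      have hfac : 1 - α * ∑ i ∈ D, W i k = 0 := by
        rcases mul_eq_zero.mp hall with h | h
        · exact absurd h hpk.ne
        · exact h
      have : ∑ j ∈ D, W k j = ∑ i ∈ D, W i k :=
        Finset.sum_congr rfl fun j _ => (hsymm k j).symm
      rw [this]; linarith
    exact katz_aux_no_flat W hsymm hnn α hα hdom hinj D ⟨x, hxD⟩ hflatD

/-- Let `W` be a symmetric `n × n` real matrix with nonnegative entries and
zero diagonal, and let `0 < α < 1/ρ(W)` be such that `I − αW` is row diagonally dominant,
i.e. `α * ∑_{j ≠ i} W i j ≤ 1` for all `i`.  Then the Katz kernel `K = (I − αW)⁻¹`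
satisfies the triangle inequality for proximities. -/
theorem katz_kernel_triangle_ineq {n : ℕ} (W : Matrix (Fin n) (Fin n) ℝ)
    (hW_symm : W.IsSymm) (hW_nonneg : ∀ i j : Fin n, 0 ≤ W i j)
    (hW_diag : ∀ i : Fin n, W i i = 0)
    (α : ℝ) (hα : 0 < α) (hρ : ∀ μ ∈ spectrum ℝ W, α * |μ| < 1)
    (hdom : ∀ i : Fin n, α * ∑ j ∈ Finset.univ.erase i, W i j ≤ 1)
    (K : Matrix (Fin n) (Fin n) ℝ) (hK : K = (1 - α • W)⁻¹) :
    ∀ x y z : Fin n, K x y + K x z - K y z ≤ K x x := by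
  intro x y z
  have hsymm : ∀ i j, W j i = W i j := hW_symm.apply
  have hdom' : ∀ i, α * ∑ j, W i j ≤ 1 := by
    intro i
    have := Finset.sum_erase Finset.univ (f := fun j => W i j) (hW_diag i)
    rw [← this]; exact hdom i
  -- `1 - α • W` is invertible
  have hdet : IsUnit (1 - α • W : Matrix (Fin n) (Fin n) ℝ).det := by
    by_contra h
    have h0 : (1 - α • W : Matrix (Fin n) (Fin n) ℝ).det = 0 := by
      by_contra h'; exact h (isUnit_iff_ne_zero.mpr h')
    have hmem : (α⁻¹ : ℝ) ∈ spectrum ℝ W := by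
      rw [spectrum.mem_iff, Matrix.isUnit_iff_isUnit_det]
      have heq : (algebraMap ℝ (Matrix (Fin n) (Fin n) ℝ)) α⁻¹ - W
          = α⁻¹ • (1 - α • W) := by
        rw [smul_sub, smul_smul, inv_mul_cancel₀ hα.ne', one_smul,
          Algebra.algebraMap_eq_smul_one]
      rw [heq, Matrix.det_smul, h0, mul_zero]
      exact fun h' => by simp at h'
    have := hρ _ hmem
    rw [abs_of_pos (inv_pos.mpr hα), mul_inv_cancel₀ hα.ne'] at this
    exact lt_irrefl 1 this
  have hinj : ∀ v : Fin n → ℝ, (1 - α • W) *ᵥ v = 0 → v = 0 := by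
    intro v hv
    calc v = 1 *ᵥ v := (Matrix.one_mulVec v).symm
      _ = (K * (1 - α • W)) *ᵥ v := by rw [hK, Matrix.nonsing_inv_mul _ hdet]
      _ = K *ᵥ ((1 - α • W) *ᵥ v) := (Matrix.mulVec_mulVec v K _).symm
      _ = K *ᵥ 0 := by rw [hv]
      _ = 0 := Matrix.mulVec_zero K
  -- K is symmetric
  have hAT : (1 - α • W : Matrix (Fin n) (Fin n) ℝ)ᵀ = 1 - α • W := by
    rw [Matrix.transpose_sub, Matrix.transpose_one, Matrix.transpose_smul, hW_symm]
  have hKT : Kᵀ = K := by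
    rw [hK, Matrix.transpose_nonsing_inv, hAT]
  have hKsym : K.IsSymm := hKT
  have hKsymm : ∀ i j, K j i = K i j := hKsym.apply
  -- the vector p
  set b : Fin n → ℝ := fun i => (if i = x then 1 else 0) - (if i = y then 1 else 0) with hb
  set p : Fin n → ℝ := fun i => K i x - K i y with hpdef
  have hpKb : p = K *ᵥ b := by
    funext i
    simp only [hpdef, hb, Matrix.mulVec, dotProduct, mul_sub, mul_ite, mul_one, mul_zero,
      Finset.sum_sub_distrib, Finset.sum_ite_eq', Finset.mem_univ, if_true]
  have hAp : (1 - α • W) *ᵥ p = b := by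
    rw [hpKb, Matrix.mulVec_mulVec, hK, Matrix.mul_nonsing_inv _ hdet, Matrix.one_mulVec]
  have hp : ∀ i, p i - α * ∑ j, W i j * p j
      = (if i = x then (1:ℝ) else 0) - (if i = y then 1 else 0) := by
    intro i
    have := congrFun hAp i
    rw [Matrix.sub_mulVec, Matrix.one_mulVec, Matrix.smul_mulVec] at this
    simpa only [Pi.sub_apply, Pi.smul_apply, smul_eq_mul, Matrix.mulVec, dotProduct] using this
  have hmax := katz_aux_max W hsymm hW_nonneg α hα hdom' hinj x y p hp z
  have h1 : p z = K z x - K z y := rfl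
  have h2 : p x = K x x - K x y := rfl
  have e1 : K z x = K x z := hKsymm x z
  have e2 : K z y = K y z := hKsymm y z
  rw [h1, h2, e1, e2] at hmax
  linarith
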